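/- Menelaus' theorem: for a triangle ABC in ℝ² (A, B, C not collinear) and points P, Q, R different from the vertices lying on the lines BC, CA, AB respectively, the points P, Q, R are collinear if and only if (B,C;P)·(C,A;Q)·(A,B;R) = -1. -/

import Mathlib

open scoped Classical

/-- The signed ratio `(X,Y;Z)`: equal to `XZ/YZ` if `Z` is (strictly) between `X` and `Y`,
and `-(XZ/YZ)` otherwise. -/
noncomputable def sratio {V : Type*} [NormedAddCommGroup V] [NormedSpace ℝ V]
    (X Y Z : V) : ℝ :=
  if Sbtw ℝ X Z Y then dist X Z / dist Y Z else -(dist X Z / dist Y Z)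

lemma sratio_param {V : Type*} [NormedAddCommGroup V] [NormedSpace ℝ V]
    {X Y Z : V} (h : X ≠ Y) {t : ℝ} (ht : Z - X = t • (Y - X)) :
    sratio X Y Z = t / (1 - t) := by
  have hZ : Z = AffineMap.lineMap X Y t := by
    rw [AffineMap.lineMap_apply, vsub_eq_sub, vadd_eq_add, ← ht]; abel
  have hd : (0:ℝ) < ‖Y - X‖ := by
    rw [norm_pos_iff]; exact sub_ne_zero.mpr h.symm
  have h1 : dist X Z = |t| * ‖Y - X‖ := by
    rw [dist_eq_norm, show X - Z = (-t) • (Y - X) by rw [show X - Z = -(Z - X) by abel, ht, neg_smul],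
      norm_smul, Real.norm_eq_abs, abs_neg]
  have h2 : dist Y Z = |1 - t| * ‖Y - X‖ := by
    rw [dist_eq_norm, show Y - Z = (1 - t) • (Y - X) by
      rw [show Y - Z = (Y - X) - (Z - X) by abel, ht, sub_smul, one_smul], norm_smul,
      Real.norm_eq_abs]
  have key : dist X Z / dist Y Z = |t| / |1 - t| := by
    rw [h1, h2, mul_div_mul_right _ _ (ne_of_gt hd)]
  unfold sratio
  have hsb : Sbtw ℝ X Z Y ↔ 0 < t ∧ t < 1 := by
    rw [hZ, sbtw_lineMap_iff]; simp [h, Set.mem_Ioo]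
  by_cases hs : Sbtw ℝ X Z Y
  · rw [if_pos hs, key]
    obtain ⟨h0, h1'⟩ := hsb.mp hs
    rw [abs_of_pos h0, abs_of_pos (by linarith : (0:ℝ) < 1 - t)]
  · rw [if_neg hs, key]
    have hn := hsb.not.mp hs
    rcases le_or_gt t 0 with h0 | h0
    · rw [abs_of_nonpos h0, abs_of_pos (by linarith : (0:ℝ) < 1 - t)]; ring
    · have h1' : 1 ≤ t := by
        by_contra hc; push_neg at hc; exact hn ⟨h0, hc⟩
      rw [abs_of_pos h0, abs_of_nonpos (by linarith : 1 - t ≤ 0), div_neg, neg_neg]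

lemma indep_of_not_collinear {A B C : EuclideanSpace ℝ (Fin 2)}
    (h : ¬ Collinear ℝ ({A, B, C} : Set (EuclideanSpace ℝ (Fin 2)))) :
    ∀ a b : ℝ, a • (B - A) + b • (C - A) = 0 → a = 0 ∧ b = 0 := by
  intro a b hab
  by_contra hcon
  apply h
  rw [collinear_iff_of_mem (Set.mem_insert A _)]
  rcases not_and_or.mp hcon with ha | hb
  · refine ⟨C - A, fun p hp => ?_⟩
    simp only [Set.mem_insert_iff, Set.mem_singleton_iff] at hp
    rcases hp with rfl | rfl | rfl
    · exact ⟨0, by simp⟩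
    · refine ⟨-(b/a), ?_⟩
      have h2 : a • (p - A) = a • ((-(b/a)) • (C - A)) := by
        rw [smul_smul, show a * (-(b/a)) = -b by field_simp, neg_smul]
        exact eq_neg_of_add_eq_zero_left hab
      have h3 := smul_right_injective _ ha h2
      rw [vadd_eq_add, ← h3]; abel
    · exact ⟨1, by simp⟩
  · refine ⟨B - A, fun p hp => ?_⟩
    simp only [Set.mem_insert_iff, Set.mem_singleton_iff] at hp
    rcases hp with rfl | rfl | rfl
    · exact ⟨0, by simp⟩
    · exact ⟨1, by simp⟩
    · refine ⟨-(a/b), ?_⟩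
      have h2 : b • (p - A) = b • ((-(a/b)) • (B - A)) := by
        rw [smul_smul, show b * (-(a/b)) = -a by field_simp, neg_smul]
        exact eq_neg_of_add_eq_zero_right hab
      have h3 := smul_right_injective _ hb h2
      rw [vadd_eq_add, ← h3]; abel

/-- **Menelaus' theorem.** For a triangle `ABC` in `ℝ²` (with `A`, `B`, `C` not collinear)
and points `P`, `Q`, `R` different from the vertices on the lines `BC`, `CA`, `AB`
respectively, `P`, `Q`, `R` are collinear iff `(B,C;P)·(C,A;Q)·(A,B;R) = -1`. -/
theorem menelaus (A B C P Q R : EuclideanSpace ℝ (Fin 2))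
    (hABC : ¬ Collinear ℝ ({A, B, C} : Set (EuclideanSpace ℝ (Fin 2))))
    (hP : Collinear ℝ ({B, C, P} : Set (EuclideanSpace ℝ (Fin 2))))
    (hPB : P ≠ B) (hPC : P ≠ C)
    (hQ : Collinear ℝ ({C, A, Q} : Set (EuclideanSpace ℝ (Fin 2))))
    (hQC : Q ≠ C) (hQA : Q ≠ A)
    (hR : Collinear ℝ ({A, B, R} : Set (EuclideanSpace ℝ (Fin 2))))
    (hRA : R ≠ A) (hRB : R ≠ B) :
    Collinear ℝ ({P, Q, R} : Set (EuclideanSpace ℝ (Fin 2))) ↔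
      sratio B C P * sratio C A Q * sratio A B R = -1 := by
  have hAB : A ≠ B := ne₁₂_of_not_collinear hABC
  have hBC : B ≠ C := ne₂₃_of_not_collinear hABC
  have hCA : C ≠ A := (ne₁₃_of_not_collinear hABC).symm
  have hind := indep_of_not_collinear hABC
  -- extract parameters
  obtain ⟨p, hp⟩ : ∃ t : ℝ, t • (C - B) = P - B := by
    have hm : P ∈ line[ℝ, B, C] :=
      hP.mem_affineSpan_of_mem_of_ne (Set.mem_insert _ _) (by simp) (by simp) hBC
    have h' : (P -ᵥ B) +ᵥ B ∈ line[ℝ, B, C] := by rwa [vsub_vadd]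
    simpa using vadd_left_mem_affineSpan_pair.mp h'
  obtain ⟨q, hq⟩ : ∃ t : ℝ, t • (A - C) = Q - C := by
    have hm : Q ∈ line[ℝ, C, A] :=
      hQ.mem_affineSpan_of_mem_of_ne (Set.mem_insert _ _) (by simp) (by simp) hCA
    have h' : (Q -ᵥ C) +ᵥ C ∈ line[ℝ, C, A] := by rwa [vsub_vadd]
    simpa using vadd_left_mem_affineSpan_pair.mp h'
  obtain ⟨r, hr⟩ : ∃ t : ℝ, t • (B - A) = R - A := by
    have hm : R ∈ line[ℝ, A, B] :=
      hR.mem_affineSpan_of_mem_of_ne (Set.mem_insert _ _) (by simp) (by simp) hAB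
    have h' : (R -ᵥ A) +ᵥ A ∈ line[ℝ, A, B] := by rwa [vsub_vadd]
    simpa using vadd_left_mem_affineSpan_pair.mp h'
  have hp1 : p ≠ 1 := by
    rintro rfl; rw [one_smul] at hp; exact hPC (sub_left_injective hp).symm
  have hq1 : q ≠ 1 := by
    rintro rfl; rw [one_smul] at hq; exact hQA (sub_left_injective hq).symm
  have hr1 : r ≠ 1 := by
    rintro rfl; rw [one_smul] at hr; exact hRB (sub_left_injective hr).symm
  have hs1 : sratio B C P = p / (1 - p) := sratio_param hBC hp.symm
  have hs2 : sratio C A Q = q / (1 - q) := sratio_param hCA hq.symm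
  have hs3 : sratio A B R = r / (1 - r) := sratio_param hAB hr.symm
  have hQP : Q - P = (p - 1) • (B - A) + (1 - p - q) • (C - A) := by
    have hPd : P = p • (C - B) + B := by rw [hp]; abel
    have hQd : Q = q • (A - C) + C := by rw [hq]; abel
    rw [hPd, hQd]; module
  have hRP : R - P = (r - 1 + p) • (B - A) + (-p) • (C - A) := by
    have hPd : P = p • (C - B) + B := by rw [hp]; abel
    have hRd : R = r • (B - A) + A := by rw [hr]; abel
    rw [hPd, hRd]; module
  have hdet : Collinear ℝ ({P, Q, R} : Set (EuclideanSpace ℝ (Fin 2))) ↔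
      (p - 1) * (-p) - (1 - p - q) * (r - 1 + p) = 0 := by
    constructor
    · intro hcol
      rw [collinear_iff_of_mem (Set.mem_insert P _)] at hcol
      obtain ⟨w, hw⟩ := hcol
      obtain ⟨s, hsQ⟩ := hw Q (by simp)
      obtain ⟨t, htR⟩ := hw R (by simp)
      have hQw : Q - P = s • w := by rw [hsQ, vadd_eq_add]; abel
      have hRw : R - P = t • w := by rw [htR, vadd_eq_add]; abel
      have h5 : t • (Q - P) - s • (R - P) = 0 := by
        rw [hQw, hRw, smul_smul, smul_smul, mul_comm, sub_self]
      rw [hQP, hRP] at h5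
      have hzero : (t * (p - 1) - s * (r - 1 + p)) • (B - A)
          + (t * (1 - p - q) - s * (-p)) • (C - A) = 0 := by
        linear_combination (norm := module) h5
      obtain ⟨e1, e2⟩ := hind _ _ hzero
      by_cases hst : s = 0 ∧ t = 0
      · obtain ⟨rfl, rfl⟩ := hst
        have h6 : (p - 1) • (B - A) + (1 - p - q) • (C - A) = 0 := by
          rw [← hQP, hQw, zero_smul]
        obtain ⟨f1, f2⟩ := hind _ _ h6
        linear_combination (-p) * f1 - (r - 1 + p) * f2
      · rcases not_and_or.mp hst with hs0 | ht0
        · have hkey : s * ((p - 1) * (-p) - (1 - p - q) * (r - 1 + p)) = 0 := by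
            linear_combination (1 - p - q) * e1 - (p - 1) * e2
          exact (mul_eq_zero.mp hkey).resolve_left hs0
        · have hkey : t * ((p - 1) * (-p) - (1 - p - q) * (r - 1 + p)) = 0 := by
            linear_combination (-p) * e1 - (r - 1 + p) * e2
          exact (mul_eq_zero.mp hkey).resolve_left ht0
    · intro h0
      rw [collinear_iff_of_mem (Set.mem_insert P _)]
      by_cases hα : p - 1 = 0 ∧ 1 - p - q = 0
      · refine ⟨R - P, fun x hx => ?_⟩
        have hQPe : Q = P := by
          have := hQP
          rw [hα.1, hα.2, zero_smul, zero_smul, add_zero] at this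
          exact sub_eq_zero.mp this
        simp only [Set.mem_insert_iff, Set.mem_singleton_iff] at hx
        rcases hx with rfl | rfl | rfl
        · exact ⟨0, by simp⟩
        · exact ⟨0, by simp [hQPe]⟩
        · exact ⟨1, by rw [one_smul, vadd_eq_add]; abel⟩
      · rcases not_and_or.mp hα with h1 | h2
        · refine ⟨Q - P, fun x hx => ?_⟩
          simp only [Set.mem_insert_iff, Set.mem_singleton_iff] at hx
          rcases hx with rfl | rfl | rfl
          · exact ⟨0, by simp⟩
          · exact ⟨1, by rw [one_smul, vadd_eq_add]; abel⟩
          · obtain ⟨c, hc⟩ : ∃ c : ℝ, c = (r - 1 + p) / (p - 1) := ⟨_, rfl⟩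
            refine ⟨c, ?_⟩
            have hγ : r - 1 + p = c * (p - 1) := by rw [hc]; field_simp
            have hδ : -p = c * (1 - p - q) := by
              rw [hc]; field_simp
              linear_combination h0
            rw [vadd_eq_add, ← sub_eq_iff_eq_add, hRP, hQP, hγ, hδ]
            module
        · refine ⟨Q - P, fun x hx => ?_⟩
          simp only [Set.mem_insert_iff, Set.mem_singleton_iff] at hx
          rcases hx with rfl | rfl | rfl
          · exact ⟨0, by simp⟩
          · exact ⟨1, by rw [one_smul, vadd_eq_add]; abel⟩
          · obtain ⟨c, hc⟩ : ∃ c : ℝ, c = (-p) / (1 - p - q) := ⟨_, rfl⟩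
            refine ⟨c, ?_⟩
            have hδ : -p = c * (1 - p - q) := by rw [hc]; field_simp
            have hγ : r - 1 + p = c * (p - 1) := by
              rw [hc]; field_simp
              linear_combination -h0
            rw [vadd_eq_add, ← sub_eq_iff_eq_add, hRP, hQP, hγ, hδ]
            module
  rw [hdet, hs1, hs2, hs3, div_mul_div_comm, div_mul_div_comm,
    div_eq_iff (mul_ne_zero (mul_ne_zero (sub_ne_zero.mpr (Ne.symm hp1))
      (sub_ne_zero.mpr (Ne.symm hq1))) (sub_ne_zero.mpr (Ne.symm hr1)))]
  constructor
  · intro h; linear_combination h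
  · intro h; linear_combination h
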